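/- Let g = (a₀(r) + Σᵢ aᵢ(r) Xⁱ)² dr² + r² g_{S^{n-1}} satisfy the zero scalar curvature equation u²Δu − (n-1) r u_r + ((n-1)(n-2)/2)(u − u³) = 0 with u = a₀ + Σ aᵢ Xⁱ and a₀ > 0. Then aᵢ(r) = 0 for all i = 1,…,n and all r; i.e. u is rotationally symmetric. -/

import Mathlib

lemma aux_norm_single_add {n : ℕ} {i j : Fin n} (h : i ≠ j) (c : ℝ) :
    ‖(EuclideanSpace.single i c + EuclideanSpace.single j c : EuclideanSpace ℝ (Fin n))‖^2
      = c^2 + c^2 := by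
  rw [norm_add_sq_real, EuclideanSpace.norm_single, EuclideanSpace.norm_single,
    EuclideanSpace.inner_single_left]
  simp [EuclideanSpace.single_apply, h.symm, sq_abs]

lemma aux_norm_single_sub {n : ℕ} {i j : Fin n} (h : i ≠ j) (c : ℝ) :
    ‖(EuclideanSpace.single i c + EuclideanSpace.single j (-c) : EuclideanSpace ℝ (Fin n))‖^2
      = c^2 + c^2 := by
  rw [norm_add_sq_real, EuclideanSpace.norm_single, EuclideanSpace.norm_single,
    EuclideanSpace.inner_single_left]
  simp [EuclideanSpace.single_apply, h.symm, sq_abs]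

lemma aux_sum_single {n : ℕ} (f : Fin n → ℝ) (i : Fin n) (c : ℝ) :
    ∑ k, f k * (EuclideanSpace.single i c : EuclideanSpace ℝ (Fin n)) k = f i * c := by
  simp [EuclideanSpace.single_apply]

lemma aux_sum_single_add {n : ℕ} (f : Fin n → ℝ) {i j : Fin n} (h : i ≠ j) (c d : ℝ) :
    ∑ k, f k * (EuclideanSpace.single i c + EuclideanSpace.single j d :
        EuclideanSpace ℝ (Fin n)) k = f i * c + f j * d := by
  have : ∀ k, (EuclideanSpace.single i c + EuclideanSpace.single j d :
      EuclideanSpace ℝ (Fin n)) k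
      = (EuclideanSpace.single i c : EuclideanSpace ℝ (Fin n)) k
        + (EuclideanSpace.single j d : EuclideanSpace ℝ (Fin n)) k := fun _ => rfl
  simp only [this, mul_add, Finset.sum_add_distrib, aux_sum_single]

/-- If `g = (a₀(r) + ∑ᵢ aᵢ(r) Xⁱ)² dr² + r² g_{S^{n-1}}` satisfies the
zero scalar curvature equation `u²Δu − (n-1) r u_r + ((n-1)(n-2)/2)(u − u³) = 0`
with `u = a₀ + ∑ aᵢ Xⁱ` (so that `Δu = −(n-1) ∑ aᵢ Xⁱ`) and `a₀ > 0`, then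
`aᵢ(r) = 0` for all `i` and `r`: the lapse is rotationally symmetric. -/
theorem conformally_flat_lapse_rotationally_symmetric
    (n : ℕ) (hn : 3 ≤ n) (r₀ : ℝ)
    (a₀ : ℝ → ℝ) (a : Fin n → ℝ → ℝ) (a₀' : ℝ → ℝ) (a' : Fin n → ℝ → ℝ)
    (hd₀ : ∀ r : ℝ, r₀ < r → HasDerivAt a₀ (a₀' r) r)
    (hd : ∀ (i : Fin n) (r : ℝ), r₀ < r → HasDerivAt (a i) (a' i r) r)
    (hpos : ∀ r : ℝ, r₀ < r → 0 < a₀ r)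
    (hode : ∀ r : ℝ, r₀ < r → ∀ x : EuclideanSpace ℝ (Fin n), ‖x‖ = 1 →
      (a₀ r + ∑ i, a i r * x i) ^ 2 * (-((n : ℝ) - 1) * ∑ i, a i r * x i)
        - ((n : ℝ) - 1) * r * (a₀' r + ∑ i, a' i r * x i)
        + (((n : ℝ) - 1) * ((n : ℝ) - 2) / 2) *
            ((a₀ r + ∑ i, a i r * x i) - (a₀ r + ∑ i, a i r * x i) ^ 3) = 0) :
    ∀ (i : Fin n) (r : ℝ), r₀ < r → a i r = 0 := by
  intro i r hr
  have hnR : (3:ℝ) ≤ (n:ℝ) := by exact_mod_cast hn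
  have hA₀ := hpos r hr
  set K : ℝ := ((n : ℝ) - 1) * ((n : ℝ) - 2) / 2 with hKdef
  -- even part of the equation: A + C * S(x)^2 = 0 for all unit x
  have key : ∀ x : EuclideanSpace ℝ (Fin n), ‖x‖ = 1 →
      (-(((n:ℝ) - 1) * r * a₀' r) + K * (a₀ r - (a₀ r)^3))
        + (-(2 * ((n:ℝ) - 1) * a₀ r) - 3 * K * a₀ r) * (∑ k, a k r * x k) ^ 2 = 0 := by
    intro x hx
    have h1 := hode r hr x hx
    have h2 := hode r hr (-x) (by rw [norm_neg, hx])
    have e1 : ∑ k, a k r * (-x) k = -∑ k, a k r * x k := by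
      rw [← Finset.sum_neg_distrib]
      exact Finset.sum_congr rfl fun k _ => by
        show a k r * (-(x k)) = -(a k r * x k); ring
    have e2 : ∑ k, a' k r * (-x) k = -∑ k, a' k r * x k := by
      rw [← Finset.sum_neg_distrib]
      exact Finset.sum_congr rfl fun k _ => by
        show a' k r * (-(x k)) = -(a' k r * x k); ring
    rw [e1, e2] at h2
    rw [hKdef]
    linear_combination (h1 + h2) / 2
  -- C is negative
  have hC : (-(2 * ((n:ℝ) - 1) * a₀ r) - 3 * K * a₀ r) < 0 := by
    have h1 : (0:ℝ) < (n:ℝ) - 1 := by linarith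
    have h2 : (0:ℝ) < (n:ℝ) - 2 := by linarith
    rw [hKdef]
    nlinarith [mul_pos h1 hA₀, mul_pos (mul_pos h1 h2) hA₀]
  -- pick j ≠ i
  obtain ⟨j, hj⟩ : ∃ j : Fin n, j ≠ i := by
    have h2n : 2 ≤ n := by omega
    exact Fintype.exists_ne_of_one_lt_card (by rw [Fintype.card_fin]; omega) i
  set A : ℝ := -(((n:ℝ) - 1) * r * a₀' r) + K * (a₀ r - (a₀ r)^3) with hAdef
  set C : ℝ := -(2 * ((n:ℝ) - 1) * a₀ r) - 3 * K * a₀ r with hCdef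
  have hc : (0:ℝ) < (Real.sqrt 2)⁻¹ := by positivity
  set c : ℝ := (Real.sqrt 2)⁻¹ with hcdef
  have hc2 : c ^ 2 = 1 / 2 := by
    rw [hcdef, inv_pow, Real.sq_sqrt (by norm_num : (0:ℝ) ≤ 2)]
    norm_num
  -- equation at e_i
  have E1 : A + C * (a i r) ^ 2 = 0 := by
    have h := key (EuclideanSpace.single i 1) (by
      rw [EuclideanSpace.norm_single]; simp)
    rw [aux_sum_single (fun k => a k r) i 1] at h
    linear_combination h
  -- equation at (e_i + e_j)/√2
  have E3 : A + C * (c * (a i r + a j r)) ^ 2 = 0 := by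
    have hnorm : ‖(EuclideanSpace.single i c + EuclideanSpace.single j c :
        EuclideanSpace ℝ (Fin n))‖ = 1 := by
      have h := aux_norm_single_add hj.symm c
      rw [hc2] at h
      nlinarith [norm_nonneg (EuclideanSpace.single i c + EuclideanSpace.single j c :
        EuclideanSpace ℝ (Fin n))]
    have h := key _ hnorm
    rw [aux_sum_single_add (fun k => a k r) hj.symm c c] at h
    linear_combination h
  -- equation at (e_i - e_j)/√2
  have E4 : A + C * (c * (a i r - a j r)) ^ 2 = 0 := by
    have hnorm : ‖(EuclideanSpace.single i c + EuclideanSpace.single j (-c) :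
        EuclideanSpace ℝ (Fin n))‖ = 1 := by
      have h := aux_norm_single_sub hj.symm c
      rw [hc2] at h
      nlinarith [norm_nonneg (EuclideanSpace.single i c + EuclideanSpace.single j (-c) :
        EuclideanSpace ℝ (Fin n))]
    have h := key _ hnorm
    rw [aux_sum_single_add (fun k => a k r) hj.symm c (-c)] at h
    linear_combination h
  -- combine
  have hCne : C ≠ 0 := ne_of_lt hC
  have h5 : C * (a i r * a j r) = 0 := by
    linear_combination (E3 - E4) / 2 - 2 * C * (a i r) * (a j r) * hc2
  have hij : a i r * a j r = 0 := by
    rcases mul_eq_zero.mp h5 with h | h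
    · exact absurd h hCne
    · exact h
  have h6 : C * ((a i r) ^ 2 - (a j r) ^ 2) = 0 := by
    linear_combination 2 * E1 - 2 * E3 + 2 * C * (a i r + a j r) ^ 2 * hc2 + 2 * h5
  have hsq : (a i r) ^ 2 = (a j r) ^ 2 := by
    rcases mul_eq_zero.mp h6 with h | h
    · exact absurd h hCne
    · linarith [sub_eq_zero.mp h]
  have h4 : (a i r) ^ 4 = 0 := by
    linear_combination (a i r) ^ 2 * hsq + (a i r) * (a j r) * hij
  exact pow_eq_zero_iff (n := 4) (by norm_num) |>.mp h4
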